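/- Let D be an integral domain, and let S be the set of integral t-invertible ideals I of D such that ⋂_{n≥1}(I^n)_v ≠ (0). Then S is closed under multiplication of ideals. -/

import Mathlib

open scoped nonZeroDivisors

variable (D : Type*) [CommRing D] [IsDomain D]
variable (K : Type*) [Field K] [Algebra D K] [IsFractionRing D K]

/-- The `v`-operation: `I_v = (I⁻¹)⁻¹`, viewed as a `D`-submodule of `K`. -/
noncomputable def vSub (I : FractionalIdeal D⁰ K) : Submodule D K :=
  (((I⁻¹)⁻¹ : FractionalIdeal D⁰ K) : Submodule D K)

/-- The `t`-operation: `I_t = ⋃ {J_v : J ⊆ I nonzero finitely generated}`. -/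
noncomputable def tSub (I : FractionalIdeal D⁰ K) : Submodule D K :=
  ⨆ J : {J : FractionalIdeal D⁰ K // J ≠ 0 ∧ (J : Submodule D K).FG ∧ J ≤ I}, vSub D K J.1

/-- A fractional ideal `I` is `t`-invertible if `(I * I⁻¹)_t = D`. -/
noncomputable def IsTInvertible (I : FractionalIdeal D⁰ K) : Prop :=
  tSub D K (I * I⁻¹) = ((1 : FractionalIdeal D⁰ K) : Submodule D K)

namespace StmtAux

open FractionalIdeal

variable {D K}

lemma my_mul_ne_zero {A B : FractionalIdeal D⁰ K} (hA : A ≠ 0) (hB : B ≠ 0) : A * B ≠ 0 := by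
  intro h
  obtain ⟨a, haA, ha⟩ : ∃ a ∈ A, a ≠ (0 : K) := by
    by_contra hc
    push_neg at hc
    exact hA (eq_zero_iff.mpr hc)
  obtain ⟨b, hbB, hb⟩ : ∃ b ∈ B, b ≠ (0 : K) := by
    by_contra hc
    push_neg at hc
    exact hB (eq_zero_iff.mpr hc)
  have : a * b ∈ A * B := mul_mem_mul haA hbB
  rw [h] at this
  exact mul_ne_zero ha hb ((eq_zero_iff.mp rfl) _ this)

lemma my_inv_ne_zero {A : FractionalIdeal D⁰ K} (hA : A ≠ 0) : A⁻¹ ≠ 0 := by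
  have hd : algebraMap D K A.den ≠ 0 :=
    IsFractionRing.to_map_ne_zero_of_mem_nonZeroDivisors A.den.2
  have h1 : spanSingleton D⁰ (algebraMap D K A.den) ≤ A⁻¹ := by
    rw [inv_eq, le_div_iff_mul_le hA, den_mul_self_eq_num']
    exact coeIdeal_le_one
  intro h
  rw [h] at h1
  exact spanSingleton_ne_zero_iff.mpr hd (le_antisymm h1 (zero_le _))

lemma my_inv_one : ((1 : FractionalIdeal D⁰ K))⁻¹ = 1 := by
  rw [inv_eq, FractionalIdeal.div_one]

lemma my_mul_le_mul {A B C E : FractionalIdeal D⁰ K} (h1 : A ≤ C) (h2 : B ≤ E) :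
    A * B ≤ C * E :=
  mul_le.mpr fun a ha b hb => mul_mem_mul (h1 ha) (h2 hb)

lemma my_mul_le_one {A B : FractionalIdeal D⁰ K} (hA1 : A ≤ 1) (hB1 : B ≤ 1) :
    A * B ≤ 1 := by
  refine mul_le.mpr fun a ha b hb => ?_
  obtain ⟨a', rfl⟩ := (mem_one_iff _).mp (hA1 ha)
  obtain ⟨b', rfl⟩ := (mem_one_iff _).mp (hB1 hb)
  exact (mem_one_iff _).mpr ⟨a' * b', by rw [_root_.map_mul]⟩

lemma my_pow_ne_zero {A : FractionalIdeal D⁰ K} (n : ℕ) (hA : A ≠ 0) : A ^ n ≠ 0 := by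
  induction n with
  | zero => rw [pow_zero]; exact one_ne_zero' (FractionalIdeal D⁰ K)
  | succ n ih => rw [pow_succ]; exact my_mul_ne_zero ih hA

lemma mul_inv_le_one (A : FractionalIdeal D⁰ K) : A * A⁻¹ ≤ 1 := by
  rw [inv_eq]; exact mul_one_div_le_one

lemma le_v (A : FractionalIdeal D⁰ K) : A ≤ (A⁻¹)⁻¹ := by
  by_cases hA : A = 0
  · simp [hA, inv_zero']
  · rw [inv_eq (I := A⁻¹), le_div_iff_mul_le (my_inv_ne_zero hA)]
    exact mul_inv_le_one A

lemma inv_v (A : FractionalIdeal D⁰ K) : ((A⁻¹)⁻¹)⁻¹ = A⁻¹ := by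
  by_cases hA : A = 0
  · simp [hA, inv_zero']
  · exact le_antisymm
      (inv_anti_mono hA (my_inv_ne_zero (my_inv_ne_zero hA)) (le_v A))
      (le_v A⁻¹)

lemma v_mono {A B : FractionalIdeal D⁰ K} (hA : A ≠ 0) (hAB : A ≤ B) :
    (A⁻¹)⁻¹ ≤ (B⁻¹)⁻¹ := by
  have hB : B ≠ 0 := fun h => hA (le_antisymm (h ▸ hAB) (zero_le _))
  exact inv_anti_mono (my_inv_ne_zero hB) (my_inv_ne_zero hA) (inv_anti_mono hA hB hAB)

lemma v_le_one {A : FractionalIdeal D⁰ K} (hA0 : A ≠ 0) (hA : A ≤ 1) : (A⁻¹)⁻¹ ≤ 1 := by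
  have h1 : (1 : FractionalIdeal D⁰ K) ≤ A⁻¹ := by
    rw [inv_eq, le_div_iff_mul_le hA0, one_mul]
    exact hA
  have := inv_anti_mono (one_ne_zero' (FractionalIdeal D⁰ K)) (my_inv_ne_zero hA0) h1
  rwa [my_inv_one] at this

lemma tSub_le_one {A : FractionalIdeal D⁰ K} (hA : A ≤ 1) :
    tSub D K A ≤ ((1 : FractionalIdeal D⁰ K) : Submodule D K) := by
  apply iSup_le
  rintro ⟨J, hJ0, _, hJA⟩
  exact coe_le_coe.mpr (v_le_one hJ0 (hJA.trans hA))

lemma one_mem_one' : (1 : K) ∈ ((1 : FractionalIdeal D⁰ K) : Submodule D K) := by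
  rw [coe_one]
  exact Submodule.one_le.mp le_rfl

lemma exists_fg {A : FractionalIdeal D⁰ K} (hA1 : A ≤ 1)
    (hA : tSub D K A = ((1 : FractionalIdeal D⁰ K) : Submodule D K)) :
    ∃ B : FractionalIdeal D⁰ K,
      B ≠ 0 ∧ (B : Submodule D K).FG ∧ B ≤ A ∧ (B⁻¹)⁻¹ = 1 := by
  cases isEmpty_or_nonempty
      {J : FractionalIdeal D⁰ K // J ≠ 0 ∧ (J : Submodule D K).FG ∧ J ≤ A} with
  | inl h =>
    exfalso
    rw [tSub, iSup_of_empty] at hA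
    have := one_mem_one' (D := D) (K := K)
    rw [← hA] at this
    exact one_ne_zero ((Submodule.mem_bot D).mp this)
  | inr h =>
    have hdir : Directed (· ≤ ·) fun J : {J : FractionalIdeal D⁰ K // J ≠ 0 ∧ (J : Submodule D K).FG ∧ J ≤ A} => vSub D K J.1 := by
      rintro ⟨a, ha0, hafg, haA⟩ ⟨b, hb0, hbfg, hbA⟩
      refine ⟨⟨a ⊔ b, ?_, ?_, sup_le haA hbA⟩, ?_, ?_⟩
      · intro h
        exact ha0 (le_antisymm (h ▸ le_sup_left) (zero_le _))
      · rw [coe_sup]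
        exact Submodule.FG.sup hafg hbfg
      · exact coe_le_coe.mpr (v_mono ha0 le_sup_left)
      · exact coe_le_coe.mpr (v_mono hb0 le_sup_right)
    have h1 : (1 : K) ∈ tSub D K A := hA ▸ one_mem_one' (D := D) (K := K)
    rw [tSub] at h1
    obtain ⟨⟨B, hB0, hBfg, hBA⟩, hB⟩ := (Submodule.mem_iSup_of_directed _ hdir).mp h1
    refine ⟨B, hB0, hBfg, hBA, le_antisymm (v_le_one hB0 (hBA.trans hA1)) ?_⟩
    rw [FractionalIdeal.one_le]
    exact mem_coe.mp hB

lemma inv_mul_inv_le {A B : FractionalIdeal D⁰ K} (hA : A ≠ 0) (hB : B ≠ 0) :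
    A⁻¹ * B⁻¹ ≤ (A * B)⁻¹ := by
  rw [inv_eq (I := A * B), le_div_iff_mul_le (my_mul_ne_zero hA hB)]
  have : A⁻¹ * B⁻¹ * (A * B) = (A * A⁻¹) * (B * B⁻¹) := by ring
  rw [this]
  calc (A * A⁻¹) * (B * B⁻¹) ≤ 1 * (B * B⁻¹) :=
        mul_left_mono (mul_inv_le_one A)
    _ = B * B⁻¹ := one_mul _
    _ ≤ 1 := mul_inv_le_one B

lemma prod_v_one {A B : FractionalIdeal D⁰ K} (hA0 : A ≠ 0) (hB0 : B ≠ 0)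
    (hA1 : A ≤ 1) (hB1 : B ≤ 1)
    (hA : (A⁻¹)⁻¹ = 1) (hB : (B⁻¹)⁻¹ = 1) : ((A * B)⁻¹)⁻¹ = 1 := by
  have hAinv : A⁻¹ = 1 := by
    have := inv_v A
    rw [hA, my_inv_one] at this
    exact this.symm
  have hBinv : B⁻¹ = 1 := by
    have := inv_v B
    rw [hB, my_inv_one] at this
    exact this.symm
  have hAB0 : A * B ≠ 0 := my_mul_ne_zero hA0 hB0
  have key : (A * B)⁻¹ = 1 := by
    apply le_antisymm
    · intro x hx
      rw [mem_inv_iff hAB0] at hx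
      have hxA : ∀ a ∈ A, x * a ∈ (1 : FractionalIdeal D⁰ K) := by
        intro a ha
        rw [← hBinv, mem_inv_iff hB0]
        intro b hb
        have := hx (a * b) (mul_mem_mul ha hb)
        rwa [← mul_assoc] at this
      rw [← hAinv]
      exact (mem_inv_iff hA0).mpr hxA
    · rw [FractionalIdeal.one_le, mem_inv_iff hAB0]
      intro y hy
      rw [one_mul]
      exact my_mul_le_one hA1 hB1 hy
  rw [key, my_inv_one]

end StmtAux

open FractionalIdeal StmtAux in
/-- the set of integral `t`-invertible ideals `I` with
`⋂_{n ≥ 1} (I^n)_v ≠ (0)` is closed under multiplication of ideals. -/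
theorem stmt_6 (I J : Ideal D)
    (hI : IsTInvertible D K (I : FractionalIdeal D⁰ K))
    (hJ : IsTInvertible D K (J : FractionalIdeal D⁰ K))
    (hIv : (⨅ (n : ℕ) (_ : 1 ≤ n), vSub D K ((I : FractionalIdeal D⁰ K) ^ n)) ≠ ⊥)
    (hJv : (⨅ (n : ℕ) (_ : 1 ≤ n), vSub D K ((J : FractionalIdeal D⁰ K) ^ n)) ≠ ⊥) :
    IsTInvertible D K ((I * J : Ideal D) : FractionalIdeal D⁰ K) ∧
      (⨅ (n : ℕ) (_ : 1 ≤ n), vSub D K (((I * J : Ideal D) : FractionalIdeal D⁰ K) ^ n)) ≠ ⊥ := by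
  -- first, nonzeroness of I and J as fractional ideals
  have tinv_ne_zero : ∀ A : FractionalIdeal D⁰ K, IsTInvertible D K A → A ≠ 0 := by
    intro A hA hA0
    rw [IsTInvertible, hA0, zero_mul] at hA
    haveI : IsEmpty {J : FractionalIdeal D⁰ K //
        J ≠ 0 ∧ (J : Submodule D K).FG ∧ J ≤ (0 : FractionalIdeal D⁰ K)} :=
      ⟨fun j => j.2.1 (le_antisymm j.2.2.2 (zero_le _))⟩
    rw [tSub, iSup_of_empty] at hA
    have := one_mem_one' (D := D) (K := K)
    rw [← hA] at this
    exact one_ne_zero ((Submodule.mem_bot D).mp this)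
  have hI0 : (I : FractionalIdeal D⁰ K) ≠ 0 := tinv_ne_zero _ hI
  have hJ0 : (J : FractionalIdeal D⁰ K) ≠ 0 := tinv_ne_zero _ hJ
  have hIJ0 : (I : FractionalIdeal D⁰ K) * (J : FractionalIdeal D⁰ K) ≠ 0 :=
    my_mul_ne_zero hI0 hJ0
  constructor
  · -- t-invertibility of I * J
    obtain ⟨A, hA0, hAfg, hAle, hAv⟩ := exists_fg (mul_inv_le_one _) hI
    obtain ⟨B, hB0, hBfg, hBle, hBv⟩ := exists_fg (mul_inv_le_one _) hJ
    have hA1 : A ≤ 1 := hAle.trans (mul_inv_le_one _)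
    have hB1 : B ≤ 1 := hBle.trans (mul_inv_le_one _)
    have hABv : ((A * B)⁻¹)⁻¹ = 1 := prod_v_one hA0 hB0 hA1 hB1 hAv hBv
    have hle : A * B ≤ ((I * J : Ideal D) : FractionalIdeal D⁰ K) *
        (((I * J : Ideal D) : FractionalIdeal D⁰ K))⁻¹ := by
      rw [coeIdeal_mul]
      calc A * B ≤ ((I : FractionalIdeal D⁰ K) * (I : FractionalIdeal D⁰ K)⁻¹) *
            ((J : FractionalIdeal D⁰ K) * (J : FractionalIdeal D⁰ K)⁻¹) :=
            my_mul_le_mul hAle hBle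
        _ = ((I : FractionalIdeal D⁰ K) * (J : FractionalIdeal D⁰ K)) *
            ((I : FractionalIdeal D⁰ K)⁻¹ * (J : FractionalIdeal D⁰ K)⁻¹) := by ring
        _ ≤ ((I : FractionalIdeal D⁰ K) * (J : FractionalIdeal D⁰ K)) *
            ((I : FractionalIdeal D⁰ K) * (J : FractionalIdeal D⁰ K))⁻¹ :=
            mul_right_mono (inv_mul_inv_le hI0 hJ0)
    rw [IsTInvertible]
    apply le_antisymm (tSub_le_one (mul_inv_le_one _))
    have := le_iSup (fun J' : {J' : FractionalIdeal D⁰ K // J' ≠ 0 ∧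
        (J' : Submodule D K).FG ∧ J' ≤ ((I * J : Ideal D) : FractionalIdeal D⁰ K) *
          (((I * J : Ideal D) : FractionalIdeal D⁰ K))⁻¹} => vSub D K J'.1)
      ⟨A * B, my_mul_ne_zero hA0 hB0, by rw [coe_mul]; exact Submodule.FG.mul hAfg hBfg, hle⟩
    rw [tSub]
    refine le_trans ?_ this
    rw [vSub, hABv]
  · -- nonvanishing of the intersection
    obtain ⟨x, hx, hx0⟩ := Submodule.exists_mem_ne_zero_of_ne_bot hIv
    obtain ⟨y, hy, hy0⟩ := Submodule.exists_mem_ne_zero_of_ne_bot hJv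
    intro hbot
    have hxy : x * y ∈ (⨅ (n : ℕ) (_ : 1 ≤ n),
        vSub D K (((I * J : Ideal D) : FractionalIdeal D⁰ K) ^ n)) := by
      rw [Submodule.mem_iInf]
      intro n
      rw [Submodule.mem_iInf]
      intro hn
      have hxn : x ∈ vSub D K ((I : FractionalIdeal D⁰ K) ^ n) := by
        have := (Submodule.mem_iInf _).mp hx n
        exact (Submodule.mem_iInf _).mp this hn
      have hyn : y ∈ vSub D K ((J : FractionalIdeal D⁰ K) ^ n) := by
        have := (Submodule.mem_iInf _).mp hy n
        exact (Submodule.mem_iInf _).mp this hn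
      set P := (I : FractionalIdeal D⁰ K) ^ n with hP
      set Q := (J : FractionalIdeal D⁰ K) ^ n with hQ
      have hP0 : P ≠ 0 := my_pow_ne_zero n hI0
      have hQ0 : Q ≠ 0 := my_pow_ne_zero n hJ0
      have hPQ : ((I * J : Ideal D) : FractionalIdeal D⁰ K) ^ n = P * Q := by
        rw [coeIdeal_mul, mul_pow]
      rw [hPQ, vSub, mem_coe]
      rw [vSub, mem_coe] at hxn hyn
      rw [mem_inv_iff (my_inv_ne_zero (my_mul_ne_zero hP0 hQ0))]
      intro z hz
      have hyz : y * z ∈ P⁻¹ := by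
        rw [mem_inv_iff hP0]
        intro a ha
        have hza : z * a ∈ Q⁻¹ := by
          rw [mem_inv_iff hQ0]
          intro b hb
          have := (mem_inv_iff (my_mul_ne_zero hP0 hQ0)).mp hz (a * b) (mul_mem_mul ha hb)
          rwa [← mul_assoc] at this
        have := (mem_inv_iff (my_inv_ne_zero hQ0)).mp hyn (z * a) hza
        rwa [← mul_assoc] at this
      have := (mem_inv_iff (my_inv_ne_zero hP0)).mp hxn (y * z) hyz
      rwa [← mul_assoc] at this
    rw [hbot] at hxy
    exact mul_ne_zero hx0 hy0 ((Submodule.mem_bot D).mp hxy)
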